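/- Let X_1,...,X_N be random variables with partial sums S_n such that for every k ∈ {1,...,N} the conditional median of S_N - S_k given S_1,...,S_k is 0 (equivalently, P(S_N - S_k ≥ 0 | S_1,...,S_k) ≥ 1/2 a.s.). Then for any b > 0, P(max_{1 ≤ n ≤ N} S_n ≥ b) ≤ 2 P(S_N ≥ b). -/

import Mathlib

open MeasureTheory ProbabilityTheory

private lemma levy_key {Ω : Type*} [MeasurableSpace Ω] (μ : Measure Ω) [IsProbabilityMeasure μ]
    (N k : ℕ) (hk1 : 1 ≤ k) (S : ℕ → Ω → ℝ) (hSmeas : ∀ n, Measurable (S n))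
    (hMed : ∀ᵐ ω ∂μ, (1:ℝ)/2 ≤
        (MeasureTheory.condExp
          (MeasurableSpace.comap (fun ω' => fun i : Fin k => S (i + 1) ω') inferInstance)
          μ (fun ω' => Set.indicator (Set.Ici (0:ℝ)) (fun _ => (1:ℝ)) (S N ω' - S k ω'))) ω)
    (b : ℝ)
    (A : Set Ω) (hA : A = {ω | b ≤ S k ω ∧ ∀ j, 1 ≤ j → j < k → S j ω < b})
    (D : Set Ω) (hD : D = {ω | 0 ≤ S N ω - S k ω}) :
    (μ A).toReal ≤ 2 * (μ (A ∩ D)).toReal := by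
  have hfmeas : Measurable (fun ω' => fun i : Fin k => S (i + 1) ω') :=
    measurable_pi_lambda _ fun i => hSmeas (i + 1)
  have hm : MeasurableSpace.comap (fun ω' => fun i : Fin k => S (i + 1) ω')
      inferInstance ≤ ‹MeasurableSpace Ω› := hfmeas.comap_le
  have hk' : k - 1 < k := Nat.sub_lt hk1 one_pos
  set i0 : Fin k := ⟨k - 1, hk'⟩ with hi0_def
  set C : Set (Fin k → ℝ) :=
    {g : Fin k → ℝ | b ≤ g i0 ∧ ∀ i : Fin k, (i : ℕ) + 1 < k → g i < b} with hC_def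
  have hC : MeasurableSet C := by
    have h2 : {g : Fin k → ℝ | ∀ i : Fin k, (i : ℕ) + 1 < k → g i < b}
        = ⋂ (i : Fin k) (_ : (i : ℕ) + 1 < k), {g : Fin k → ℝ | g i < b} := by
      ext g; simp
    have : C = {g : Fin k → ℝ | b ≤ g i0}
        ∩ {g : Fin k → ℝ | ∀ i : Fin k, (i : ℕ) + 1 < k → g i < b} := rfl
    rw [this, h2]
    exact (measurableSet_le measurable_const (measurable_pi_apply i0)).inter
      (MeasurableSet.iInter fun i => MeasurableSet.iInter fun _ =>
        measurableSet_lt (measurable_pi_apply i) measurable_const)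
  have hki : (i0 : ℕ) + 1 = k := Nat.sub_add_cancel hk1
  have hApre : A = (fun ω' => fun i : Fin k => S (i + 1) ω') ⁻¹' C := by
    ext ω
    simp only [hA, hC_def, Set.mem_setOf_eq, Set.mem_preimage]
    constructor
    · rintro ⟨h1, h2⟩
      refine ⟨by rw [hki]; exact h1, fun i hi => h2 ((i : ℕ) + 1) (by omega) hi⟩
    · rintro ⟨g1, g2⟩
      refine ⟨by rw [hki] at g1; exact g1, ?_⟩
      intro j hj1 hjk
      have := g2 ⟨j - 1, by omega⟩ (by simpa using (by omega : j - 1 + 1 < k))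
      simpa [Nat.sub_add_cancel hj1] using this
  have hAm : MeasurableSet[MeasurableSpace.comap (fun ω' => fun i : Fin k => S (i + 1) ω')
      inferInstance] A := ⟨C, hC, hApre.symm⟩
  have hAmeas : MeasurableSet A := hm _ hAm
  have hDmeas : MeasurableSet D := by
    rw [hD]; exact measurableSet_le measurable_const ((hSmeas N).sub (hSmeas k))
  set f : Ω → ℝ :=
    fun ω' => Set.indicator (Set.Ici (0:ℝ)) (fun _ => (1:ℝ)) (S N ω' - S k ω') with hf_def
  have hf_eq : f = D.indicator (fun _ => (1:ℝ)) := by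
    ext ω
    simp only [hf_def, hD, Set.indicator_apply, Set.mem_Ici, Set.mem_setOf_eq]
  have hfint : Integrable f μ := by
    rw [hf_eq]
    exact (integrable_const (1:ℝ)).indicator hDmeas
  have h1 : ∫ _ω in A, (1/2 : ℝ) ∂μ ≤
      ∫ ω in A, (μ[f|MeasurableSpace.comap (fun ω' => fun i : Fin k => S (i + 1) ω')
        inferInstance]) ω ∂μ := by
    refine setIntegral_mono_ae ?_ integrable_condExp.integrableOn ?_
    · exact integrableOn_const (measure_ne_top μ _)
    · exact hMed
  rw [setIntegral_condExp hm hfint hAm] at h1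
  have h2 : ∫ ω in A, f ω ∂μ = (μ (A ∩ D)).toReal := by
    rw [hf_eq, setIntegral_indicator hDmeas, setIntegral_const]
    simp [measureReal_def]
  have h3 : ∫ _ω in A, (1/2 : ℝ) ∂μ = (μ A).toReal * (1/2) := by
    rw [setIntegral_const]; simp [smul_eq_mul, measureReal_def]
  rw [h2, h3] at h1
  linarith

/-- Generalised Lévy maximal inequality: if conditionally on the past partial
sums the remaining sum `S N - S k` is at least as likely to be nonnegative as
negative (conditional median 0), then the running maximum satisfies
`P(max_{1 ≤ n ≤ N} S n ≥ b) ≤ 2 P(S N ≥ b)`. -/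
theorem generalised_levy_inequality
    {Ω : Type*} [MeasurableSpace Ω] (μ : Measure Ω) [IsProbabilityMeasure μ]
    (N : ℕ) (hN : 1 ≤ N) (X : ℕ → Ω → ℝ) (hXmeas : ∀ i, Measurable (X i))
    (S : ℕ → Ω → ℝ) (hS : ∀ n ω, S n ω = ∑ i ∈ Finset.range n, X i ω)
    (hMed : ∀ k, 1 ≤ k → k ≤ N →
      ∀ᵐ ω ∂μ, (1:ℝ)/2 ≤
        (MeasureTheory.condExp
          (MeasurableSpace.comap (fun ω' => fun i : Fin k => S (i + 1) ω') inferInstance)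
          μ (fun ω' => Set.indicator (Set.Ici (0:ℝ)) (fun _ => (1:ℝ)) (S N ω' - S k ω'))) ω)
    (b : ℝ) (hb : 0 < b) :
    μ {ω | ∃ n, 1 ≤ n ∧ n ≤ N ∧ b ≤ S n ω} ≤ 2 * μ {ω | b ≤ S N ω} := by
  classical
  have hSmeas : ∀ n, Measurable (S n) := by
    intro n
    have h : S n = fun ω => ∑ i ∈ Finset.range n, X i ω := funext (hS n)
    rw [h]
    exact Finset.measurable_sum _ fun i _ => hXmeas i
  set D : ℕ → Set Ω := fun k => {ω | 0 ≤ S N ω - S k ω} with hD_def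
  set A : ℕ → Set Ω := fun k => {ω | b ≤ S k ω ∧ ∀ j, 1 ≤ j → j < k → S j ω < b} with hA_def
  have hAmeas : ∀ k, MeasurableSet (A k) := by
    intro k
    have h2 : {ω | ∀ j, 1 ≤ j → j < k → S j ω < b}
        = ⋂ (j : ℕ) (_ : 1 ≤ j) (_ : j < k), {ω | S j ω < b} := by
      ext ω; simp
    have : A k = {ω | b ≤ S k ω} ∩ {ω | ∀ j, 1 ≤ j → j < k → S j ω < b} := rfl
    rw [this, h2]
    exact (measurableSet_le measurable_const (hSmeas k)).inter
      (MeasurableSet.iInter fun j => MeasurableSet.iInter fun _ =>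
        MeasurableSet.iInter fun _ => measurableSet_lt (hSmeas j) measurable_const)
  have hDmeas : ∀ k, MeasurableSet (D k) :=
    fun k => measurableSet_le measurable_const ((hSmeas N).sub (hSmeas k))
  have hdisj : ∀ k ∈ Finset.Icc 1 N, ∀ l ∈ Finset.Icc 1 N, k ≠ l → Disjoint (A k) (A l) := by
    have base : ∀ k l, 1 ≤ k → k < l → Disjoint (A k) (A l) := by
      intro k l hk hkl
      rw [Set.disjoint_left]
      intro ω hωk hωl
      exact absurd hωk.1 (not_le.mpr (hωl.2 k hk hkl))
    intro k hk l hl hne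
    simp only [Finset.mem_Icc] at hk hl
    rcases lt_or_gt_of_ne hne with h | h
    · exact base k l hk.1 h
    · exact (base l k hl.1 h).symm
  have hE : {ω | ∃ n, 1 ≤ n ∧ n ≤ N ∧ b ≤ S n ω} = ⋃ k ∈ Finset.Icc 1 N, A k := by
    ext ω
    simp only [Set.mem_setOf_eq, Set.mem_iUnion, Finset.mem_Icc, exists_prop]
    constructor
    · rintro ⟨n, hn1, hnN, hb'⟩
      have hex : ∃ m, 1 ≤ m ∧ b ≤ S m ω := ⟨n, hn1, hb'⟩
      refine ⟨Nat.find hex, ⟨(Nat.find_spec hex).1,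
        le_trans (Nat.find_le ⟨hn1, hb'⟩) hnN⟩, (Nat.find_spec hex).2, ?_⟩
      intro j hj1 hjm
      by_contra hcon
      push_neg at hcon
      exact absurd (Nat.find_le ⟨hj1, hcon⟩) (not_le.mpr hjm)
    · rintro ⟨k, ⟨hk1, hkN⟩, hωk⟩
      exact ⟨k, hk1, hkN, hωk.1⟩
  have key : ∀ k, 1 ≤ k → k ≤ N →
      (μ (A k)).toReal ≤ 2 * (μ (A k ∩ D k)).toReal := fun k hk1 hkN =>
    levy_key μ N k hk1 S hSmeas (hMed k hk1 hkN) b (A k) rfl (D k) rfl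
  have hsub : ∀ k ∈ Finset.Icc 1 N, A k ∩ D k ⊆ {ω | b ≤ S N ω} := by
    intro k _ ω hω
    have h1 : b ≤ S k ω := hω.1.1
    have h2 : 0 ≤ S N ω - S k ω := hω.2
    simp only [Set.mem_setOf_eq]
    linarith
  rw [hE]
  have hmeasU : μ (⋃ k ∈ Finset.Icc 1 N, A k) = ∑ k ∈ Finset.Icc 1 N, μ (A k) :=
    measure_biUnion_finset (fun k hk l hl hne => hdisj k hk l hl hne)
      (fun k _ => hAmeas k)
  have hUID : (⋃ k ∈ Finset.Icc 1 N, A k ∩ D k) ⊆ {ω | b ≤ S N ω} := by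
    simp only [Set.iUnion_subset_iff]
    exact hsub
  have hdisj2 : ∀ k ∈ Finset.Icc 1 N, ∀ l ∈ Finset.Icc 1 N, k ≠ l →
      Disjoint (A k ∩ D k) (A l ∩ D l) := fun k hk l hl hne =>
    Disjoint.mono Set.inter_subset_left Set.inter_subset_left (hdisj k hk l hl hne)
  have hsum2 : ∑ k ∈ Finset.Icc 1 N, μ (A k ∩ D k) ≤ μ {ω | b ≤ S N ω} := by
    rw [← measure_biUnion_finset (fun k hk l hl hne => hdisj2 k hk l hl hne)
      (fun k _ => (hAmeas k).inter (hDmeas k))]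
    exact measure_mono hUID
  have hfin : ∀ s : Set Ω, μ s ≠ ⊤ := fun s => measure_ne_top μ s
  have hreal : (μ (⋃ k ∈ Finset.Icc 1 N, A k)).toReal ≤ 2 * (μ {ω | b ≤ S N ω}).toReal := by
    rw [hmeasU, ENNReal.toReal_sum (fun k _ => hfin (A k))]
    calc ∑ k ∈ Finset.Icc 1 N, (μ (A k)).toReal
        ≤ ∑ k ∈ Finset.Icc 1 N, 2 * (μ (A k ∩ D k)).toReal := by
          refine Finset.sum_le_sum fun k hk => ?_
          simp only [Finset.mem_Icc] at hk
          exact key k hk.1 hk.2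
      _ = 2 * ∑ k ∈ Finset.Icc 1 N, (μ (A k ∩ D k)).toReal := by
          rw [Finset.mul_sum]
      _ = 2 * (∑ k ∈ Finset.Icc 1 N, μ (A k ∩ D k)).toReal := by
          rw [ENNReal.toReal_sum (fun k _ => hfin _)]
      _ ≤ 2 * (μ {ω | b ≤ S N ω}).toReal := by
          have := ENNReal.toReal_mono (hfin _) hsum2
          linarith
  have h2top : (2 : ENNReal) * μ {ω | b ≤ S N ω} ≠ ⊤ :=
    ENNReal.mul_ne_top (by norm_num) (hfin _)
  rw [← ENNReal.toReal_le_toReal (hfin _) h2top]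
  rw [ENNReal.toReal_mul]
  simpa using hreal
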